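/- Since f and g are coprime, the image of g − f in the ℚ-algebra V = ℚ[X]/(f(X)) is a unit; consequently v is a cyclic vector for A, i.e. the vectors v, Av, A²v, …, A^(n−1)v form a ℚ-basis of V. -/

import Mathlib

open Polynomial

noncomputable section

/-- For coprime monic `f, g ∈ ℤ[X]` of degree `n` with
`f(0) = −1`, `g(0) = 1`, the image of `g − f` in `V = ℚ[X]/(f)` is a unit;
consequently `v` is a cyclic vector for `A`: the vectors
`v, Av, …, A^(n−1)v` form a `ℚ`-basis of `V`. -/
theorem stmt_2
    (n : ℕ) (hn : 0 < n)
    (f g : Polynomial ℤ)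
    (hfm : f.Monic) (hgm : g.Monic)
    (hfd : f.natDegree = n) (hgd : g.natDegree = n)
    (hcop : IsCoprime f g)
    (hf0 : f.coeff 0 = -1) (hg0 : g.coeff 0 = 1)
    (fq : Polynomial ℚ) (hfq : fq = f.map (Int.castRingHom ℚ))
    (ξ : AdjoinRoot fq) (hξ : ξ = AdjoinRoot.root fq)
    (Be Ce : AdjoinRoot fq →ₗ[ℚ] AdjoinRoot fq)
    (hBe1 : ∀ k : ℕ, k < n - 1 → Be (ξ ^ k) = ξ ^ (k + 1))
    (hBe2 : Be (ξ ^ (n - 1)) = AdjoinRoot.mk fq (X ^ n - g.map (Int.castRingHom ℚ)))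
    (hCe : ∀ w : AdjoinRoot fq, ξ * Ce w = Be w)
    (v : AdjoinRoot fq) (hv : v = Ce (ξ ^ (n - 1)) - ξ ^ (n - 1)) :
    IsUnit (AdjoinRoot.mk fq (g.map (Int.castRingHom ℚ) - f.map (Int.castRingHom ℚ))) ∧
      LinearIndependent ℚ (fun k : Fin n => ξ ^ (k : ℕ) * v) ∧
      Submodule.span ℚ (Set.range fun k : Fin n => ξ ^ (k : ℕ) * v) = ⊤ := by
  have hfq0 : fq ≠ 0 := by
    rw [hfq]
    exact (hfm.map (Int.castRingHom ℚ)).ne_zero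
  have hmkf : AdjoinRoot.mk fq (f.map (Int.castRingHom ℚ)) = 0 := by
    rw [← hfq]; exact AdjoinRoot.mk_self
  -- the unit statement
  obtain ⟨a, b, hab⟩ := hcop
  have hunit : IsUnit (AdjoinRoot.mk fq (g.map (Int.castRingHom ℚ))) := by
    refine IsUnit.of_mul_eq_one (AdjoinRoot.mk fq (b.map (Int.castRingHom ℚ))) ?_
    have := congrArg (fun p : Polynomial ℤ =>
      AdjoinRoot.mk fq (p.map (Int.castRingHom ℚ))) hab
    simp only [Polynomial.map_add, Polynomial.map_mul, Polynomial.map_one, map_add, map_mul,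
      map_one, hmkf, mul_zero, zero_add] at this
    rw [mul_comm] at this
    simpa using this
  have hu1 : IsUnit (AdjoinRoot.mk fq (g.map (Int.castRingHom ℚ) - f.map (Int.castRingHom ℚ))) := by
    rw [map_sub, hmkf, sub_zero]; exact hunit
  refine ⟨hu1, ?_⟩
  -- ξ * v = - mk g
  have hξn : ξ ^ n = AdjoinRoot.mk fq (X ^ n) := by
    rw [hξ, ← AdjoinRoot.mk_X, ← map_pow]
  have hxv : ξ * v = - AdjoinRoot.mk fq (g.map (Int.castRingHom ℚ)) := by
    rw [hv, mul_sub, hCe, hBe2, ← pow_succ', Nat.sub_add_cancel hn, hξn, map_sub]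
    ring
  have hvunit : IsUnit v := by
    have : IsUnit (ξ * v) := by rw [hxv]; exact hunit.neg
    exact isUnit_of_mul_isUnit_right this
  obtain ⟨w, hw⟩ := hvunit.exists_left_inv
  -- multiplication by v is a linear equivalence
  let e : AdjoinRoot fq ≃ₗ[ℚ] AdjoinRoot fq :=
    LinearEquiv.ofLinear (LinearMap.mulLeft ℚ v) (LinearMap.mulLeft ℚ w)
      (by ext x; simp [LinearMap.mulLeft, ← mul_assoc, mul_comm v w, hw])
      (by ext x; simp [LinearMap.mulLeft, ← mul_assoc, hw])
  have hdim : (AdjoinRoot.powerBasis hfq0).dim = n := by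
    rw [AdjoinRoot.powerBasis_dim, hfq, hfm.natDegree_map, hfd]
  let bb : Module.Basis (Fin n) ℚ (AdjoinRoot fq) :=
    ((AdjoinRoot.powerBasis hfq0).basis.reindex (finCongr hdim)).map e
  have hbb : ∀ k : Fin n, bb k = ξ ^ (k : ℕ) * v := by
    intro k
    simp only [bb, Module.Basis.map_apply, Module.Basis.reindex_apply, finCongr_symm, finCongr_apply,
      PowerBasis.basis_eq_pow, AdjoinRoot.powerBasis_gen]
    simp [e, LinearMap.mulLeft, hξ, mul_comm]
  have hfun : (fun k : Fin n => ξ ^ (k : ℕ) * v) = bb := by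
    funext k; rw [hbb]
  rw [hfun]
  exact ⟨bb.linearIndependent, bb.span_eq⟩
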